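/- Let Z_i = ⟨c_i, G_i⟩ ⊂ ℝ^d be zonotopes with centers c_i ∈ ℝ^d and generator matrices G_i ∈ ℝ^{d×D_i} for i = 1, …, n, where n ≥ 2. Suppose there exist matrices Γ_i ∈ ℝ^{D_n×D_i} for i = 1, …, n−1 and a vector γ ∈ ℝ^{D_n} such that G_i = G_n Γ_i for every i = 1, …, n−1, c_1 + ⋯ + c_{n−1} = c_n + G_n γ, and Σ_{i=1}^{n−1} |Γ_i| 1_{D_i} + |γ| ≤ 1_{D_n} componentwise. Then the Minkowski sum Z_1 ⊕ Z_2 ⊕ ⋯ ⊕ Z_{n−1} is contained in Z_n. -/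

import Mathlib

open Matrix Pointwise BigOperators

/-- The zonotope `⟨c, G⟩ = {c + Gξ : ‖ξ‖_∞ ≤ 1}` (sup norm on the Pi type). -/
def zonotope {d D : Type*} [Fintype d] [Fintype D]
    (c : d → ℝ) (G : Matrix d D ℝ) : Set (d → ℝ) :=
  {x | ∃ ξ : D → ℝ, ‖ξ‖ ≤ 1 ∧ x = c + G.mulVec ξ}

/-- Minkowski sum of a finite family of sets. -/
def minkSum {d : Type*} {ι : Type*} [Fintype ι] [AddCommMonoid d]
    (Z : ι → Set d) : Set d :=
  {x | ∃ p : ι → d, (∀ i, p i ∈ Z i) ∧ x = ∑ i, p i}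

/-- Lemma 1 (zonotope containment):  if `G i = Gₙ Γ i`,
`∑ cᵢ = cₙ + Gₙ γ` and `∑ |Γᵢ| 1 + |γ| ≤ 1` componentwise, then
`Z₁ ⊕ ⋯ ⊕ Z_{n-1} ⊆ Zₙ`. -/
theorem zonotope_inclusion
    {v m : ℕ} (hm : 1 ≤ m)  -- `m = n - 1`, so `n ≥ 2`
    {Dn : ℕ} {Di : Fin m → ℕ}
    (c : ∀ _ : Fin m, Fin v → ℝ) (G : ∀ i : Fin m, Matrix (Fin v) (Fin (Di i)) ℝ)
    (cn : Fin v → ℝ) (Gn : Matrix (Fin v) (Fin Dn) ℝ)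
    (Γ : ∀ i : Fin m, Matrix (Fin Dn) (Fin (Di i)) ℝ) (γ : Fin Dn → ℝ)
    (hG : ∀ i, G i = Gn * Γ i)
    (hc : (∑ i, c i) = cn + Gn.mulVec γ)
    (hineq : ∀ j, (∑ i, ∑ k, |Γ i j k|) + |γ j| ≤ 1) :
    minkSum (fun i => zonotope (c i) (G i)) ⊆ zonotope cn Gn := by
  intro x hx
  obtain ⟨p, hp, hxsum⟩ := hx
  choose ξ hξ hpx using hp
  refine ⟨(∑ i, (Γ i).mulVec (ξ i)) + γ, ?_, ?_⟩
  · rw [pi_norm_le_iff_of_nonneg (by norm_num)]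
    intro j
    have hj : ((∑ i, (Γ i).mulVec (ξ i)) + γ) j
        = (∑ i, ((Γ i).mulVec (ξ i)) j) + γ j := by
      simp [Finset.sum_apply]
    rw [hj]
    calc ‖(∑ i, ((Γ i).mulVec (ξ i)) j) + γ j‖
        ≤ ‖∑ i, ((Γ i).mulVec (ξ i)) j‖ + ‖γ j‖ := norm_add_le _ _
      _ ≤ (∑ i, ∑ k, |Γ i j k|) + |γ j| := by
          gcongr
          refine (norm_sum_le _ _).trans ?_
          apply Finset.sum_le_sum
          intro i _
          simp only [Matrix.mulVec, dotProduct, Real.norm_eq_abs]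
          refine (Finset.abs_sum_le_sum_abs _ _).trans ?_
          apply Finset.sum_le_sum
          intro k _
          rw [abs_mul]
          have h1 : |ξ i k| ≤ 1 := by
            have := norm_le_pi_norm (ξ i) k
            simpa [Real.norm_eq_abs] using this.trans (hξ i)
          nlinarith [abs_nonneg (Γ i j k), abs_nonneg (ξ i k)]
          exact (Real.norm_eq_abs _).le
      _ ≤ 1 := hineq j
  · have hx2 : x = ∑ i, (c i + (G i).mulVec (ξ i)) := by
      rw [hxsum]; exact Finset.sum_congr rfl fun i _ => hpx i
    rw [hx2, Finset.sum_add_distrib, hc]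
    have : Gn.mulVec ((∑ i, (Γ i).mulVec (ξ i)) + γ)
        = (∑ i, (G i).mulVec (ξ i)) + Gn.mulVec γ := by
      rw [Matrix.mulVec_add]
      congr 1
      rw [show Gn.mulVec (∑ i, (Γ i).mulVec (ξ i))
          = ∑ i, Gn.mulVec ((Γ i).mulVec (ξ i)) from map_sum Gn.mulVecLin _ _]
      exact Finset.sum_congr rfl fun i _ => by rw [hG, Matrix.mulVec_mulVec]
    rw [this]
    abel
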